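/- For 0 < q < 1 and α, β > 0, the fractional q-integrals with lower limit 0 satisfy the semigroup property (I^α_{q,0+} I^β_{q,0+} f)(x) = (I^{α+β}_{q,0+} f)(x) for every f continuous on [0,b] and x ∈ (0,b]. -/

import Mathlib

noncomputable section
open Real

/-- q-bracket [α]_q = (1-q^α)/(1-q) (real exponent). -/
def qBracket (q α : ℝ) : ℝ := (1 - q ^ α) / (1 - q)

/-- infinite q-Pochhammer (a;q)_∞ = ∏_{k=0}^∞ (1 - q^k a). -/
def qPochInf (q a : ℝ) : ℝ := ∏' k : ℕ, (1 - q ^ k * a)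

/-- (a;q)_α = (a;q)_∞ / (q^α a;q)_∞. -/
def qPoch (q a α : ℝ) : ℝ := qPochInf q a / qPochInf q (q ^ α * a)

/-- q-Gamma function. -/
def qGamma (q x : ℝ) : ℝ := qPochInf q q / qPochInf q (q ^ x) * (1 - q) ^ (1 - x)

/-- Jackson q-integral ∫₀^a f(x) d_q x. -/
def jackson (q a : ℝ) (f : ℝ → ℝ) : ℝ := (1 - q) * a * ∑' m : ℕ, q ^ m * f (a * q ^ m)

/-- Jackson q-derivative. -/
def Dq (q : ℝ) (f : ℝ → ℝ) (x : ℝ) : ℝ := (f x - f (q * x)) / (x * (1 - q))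

/-- Riemann–Liouville fractional q-integral of order α with lower limit 0 (I⁰ = id). -/
def Iq (q α : ℝ) (f : ℝ → ℝ) (x : ℝ) : ℝ :=
  if α = 0 then f x
  else x ^ (α - 1) / qGamma q α * jackson q x (fun t => qPoch q (q * t / x) (α - 1) * f t)

/-- Riemann–Liouville fractional q-derivative D^α = D_q^{⌈α⌉} I^{⌈α⌉-α}. -/
def DqRL (q α : ℝ) (f : ℝ → ℝ) (x : ℝ) : ℝ :=
  (fun g => Dq q g)^[⌈α⌉₊] (fun y => Iq q ((⌈α⌉₊ : ℝ) - α) f y) x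

/-- bi-ordinal Hilfer fractional q-derivative of orders α,β and type μ. -/
def DbiHilfer (q α β μ : ℝ) (f : ℝ → ℝ) (x : ℝ) : ℝ :=
  Iq q (μ * (1 - α)) (fun y => Dq q (fun z => Iq q ((1 - μ) * (1 - β)) f z) y) x

/-- membership in L¹_q[0,b] : the defining Jackson series converges absolutely. -/
def MemL1q (q b : ℝ) (f : ℝ → ℝ) : Prop := Summable (fun m : ℕ => q ^ m * |f (b * q ^ m)|)

/-- the L¹_q[0,b] norm. -/
def L1qNorm (q b : ℝ) (f : ℝ → ℝ) : ℝ := (1 - q) * b * ∑' m : ℕ, q ^ m * |f (b * q ^ m)|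




open PowerSeries Finset in
lemma _root_.trivial_placeholder : True := trivial

section PS
open PowerSeries Finset

/-- coefficients u_j(a) = (a;q)_j / (q;q)_j -/
def uCoef (q a : ℝ) (j : ℕ) : ℝ := ∏ i ∈ Finset.range j, ((1 - a * q ^ i) / (1 - q ^ (i + 1)))

lemma uCoef_zero (q a : ℝ) : uCoef q a 0 = 1 := by simp [uCoef]

lemma uCoef_succ (q a : ℝ) (j : ℕ) :
    uCoef q a (j + 1) = uCoef q a j * ((1 - a * q ^ j) / (1 - q ^ (j + 1))) := by
  unfold uCoef; exact Finset.prod_range_succ _ j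

lemma one_sub_pow_pos {q : ℝ} (hq0 : 0 < q) (hq1 : q < 1) (j : ℕ) : 0 < 1 - q ^ (j + 1) := by
  have : q ^ (j + 1) < 1 := pow_lt_one₀ hq0.le hq1 (Nat.succ_ne_zero j)
  linarith

lemma uCoef_rec {q : ℝ} (hq0 : 0 < q) (hq1 : q < 1) (a : ℝ) (j : ℕ) :
    (1 - q ^ (j + 1)) * uCoef q a (j + 1) = (1 - a * q ^ j) * uCoef q a j := by
  rw [uCoef_succ]
  field_simp [(one_sub_pow_pos hq0 hq1 j).ne']

/-- the power series Σ u_j(a) X^j -/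
def Useries (q a : ℝ) : PowerSeries ℝ := PowerSeries.mk (uCoef q a)

lemma coeff_Useries (q a : ℝ) (n : ℕ) : PowerSeries.coeff n (Useries q a) = uCoef q a n := by
  simp [Useries]

lemma rescale_C' (b c : ℝ) : rescale b (C c) = C c := by
  ext n; cases n <;> simp [coeff_rescale]

lemma rescale_X' (b : ℝ) : rescale b (X : PowerSeries ℝ) = C b * X := by
  ext n
  rw [coeff_rescale, PowerSeries.coeff_C_mul, PowerSeries.coeff_X]
  rcases eq_or_ne n 1 with h | h <;> simp [h]

lemma rescale_one_sub_X (b : ℝ) : rescale b (1 - X : PowerSeries ℝ) = 1 - C b * X := by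
  rw [map_sub, map_one, rescale_X']

lemma rescale_one_sub_CX (b c : ℝ) :
    rescale b (1 - C c * X) = 1 - C (c * b) * X := by
  rw [map_sub, map_one, map_mul, rescale_X', rescale_C', map_mul, ← mul_assoc, ← map_mul]

lemma Useries_funeq {q : ℝ} (hq0 : 0 < q) (hq1 : q < 1) (a : ℝ) :
    (1 - X) * Useries q a = (1 - C a * X) * rescale q (Useries q a) := by
  ext n
  cases n with
  | zero =>
    simp [PowerSeries.coeff_mul, Finset.Nat.antidiagonal_zero, coeff_Useries, coeff_rescale,
      uCoef_zero]
  | succ k =>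
    have L : PowerSeries.coeff (k + 1) ((1 - X) * Useries q a)
        = uCoef q a (k + 1) - uCoef q a k := by
      rw [sub_mul, one_mul, map_sub, PowerSeries.coeff_succ_X_mul, coeff_Useries, coeff_Useries]
    have R : PowerSeries.coeff (k + 1) ((1 - C a * X) * rescale q (Useries q a))
        = q ^ (k + 1) * uCoef q a (k + 1) - a * (q ^ k * uCoef q a k) := by
      rw [sub_mul, one_mul, map_sub, mul_assoc, PowerSeries.coeff_C_mul,
        PowerSeries.coeff_succ_X_mul, coeff_rescale, coeff_rescale, coeff_Useries, coeff_Useries]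
    rw [L, R]
    have h := uCoef_rec hq0 hq1 a k
    ring_nf
    ring_nf at h
    linarith

lemma Useries_unique {q : ℝ} (hq0 : 0 < q) (hq1 : q < 1) (c : ℝ) (F : PowerSeries ℝ)
    (h0 : PowerSeries.coeff 0 F = 1)
    (heq : (1 - X) * F = (1 - C c * X) * rescale q F) : F = Useries q c := by
  ext n
  induction n with
  | zero => simpa [coeff_Useries, uCoef_zero] using h0
  | succ k ih =>
    have hc := congrArg (PowerSeries.coeff (k + 1)) heq
    rw [sub_mul, sub_mul, one_mul, one_mul, map_sub, map_sub, mul_assoc,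
      PowerSeries.coeff_succ_X_mul, PowerSeries.coeff_C_mul, PowerSeries.coeff_succ_X_mul,
      coeff_rescale, coeff_rescale] at hc
    rw [coeff_Useries] at ih ⊢
    have hrec := uCoef_rec hq0 hq1 c k
    have hne := (one_sub_pow_pos hq0 hq1 k).ne'
    have key : (1 - q ^ (k + 1)) * PowerSeries.coeff (k + 1) F
        = (1 - q ^ (k + 1)) * uCoef q c (k + 1) := by
      rw [hrec, ← ih]; ring_nf; ring_nf at hc; linarith
    exact mul_left_cancel₀ hne key

lemma one_sub_CX_ne_zero (b : ℝ) : (1 - C b * X : PowerSeries ℝ) ≠ 0 := by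
  intro h
  have := congrArg (PowerSeries.constantCoeff) h
  simp at this

lemma Useries_mul {q : ℝ} (hq0 : 0 < q) (hq1 : q < 1) (a b : ℝ) :
    rescale b (Useries q a) * Useries q b = Useries q (a * b) := by
  apply Useries_unique hq0 hq1
  · simp [PowerSeries.coeff_mul, coeff_rescale, coeff_Useries, uCoef_zero]
  · apply mul_left_cancel₀ (one_sub_CX_ne_zero b)
    have h1 := Useries_funeq hq0 hq1 a
    have h2 := Useries_funeq hq0 hq1 b
    have e1 : (1 - C b * X) * rescale b (Useries q a)
        = rescale b ((1 - X) * Useries q a) := by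
      rw [map_mul, rescale_one_sub_X]
    have e2 : rescale b ((1 - C a * X) * rescale q (Useries q a))
        = (1 - C (a * b) * X) * rescale b (rescale q (Useries q a)) := by
      rw [map_mul, rescale_one_sub_CX]
    have e3 : rescale b (rescale q (Useries q a)) = rescale q (rescale b (Useries q a)) := by
      rw [rescale_rescale, rescale_rescale, mul_comm]
    calc (1 - C b * X) * ((1 - X) * (rescale b (Useries q a) * Useries q b))
        = ((1 - C b * X) * rescale b (Useries q a)) * ((1 - X) * Useries q b) := by ring
      _ = rescale b ((1 - C a * X) * rescale q (Useries q a))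
            * ((1 - C b * X) * rescale q (Useries q b)) := by rw [e1, h1, h2]
      _ = ((1 - C (a * b) * X) * rescale q (rescale b (Useries q a)))
            * ((1 - C b * X) * rescale q (Useries q b)) := by rw [e2, e3]
      _ = (1 - C b * X) * ((1 - C (a * b) * X)
            * (rescale q (rescale b (Useries q a)) * rescale q (Useries q b))) := by ring
      _ = (1 - C b * X) * ((1 - C (a * b) * X)
            * rescale q (rescale b (Useries q a) * Useries q b)) := by rw [← map_mul]

end PS
section PS2
open PowerSeries Finset
/-- the q-Vandermonde convolution -/
lemma qVandermonde {q : ℝ} (hq0 : 0 < q) (hq1 : q < 1) (a b : ℝ) (k : ℕ) :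
    ∑ m ∈ Finset.range (k + 1), b ^ m * uCoef q a m * uCoef q b (k - m)
      = uCoef q (a * b) k := by
  have := congrArg (PowerSeries.coeff k) (Useries_mul hq0 hq1 a b)
  rw [PowerSeries.coeff_mul, coeff_Useries, Finset.Nat.sum_antidiagonal_eq_sum_range_succ_mk] at this
  rw [← this]
  refine Finset.sum_congr rfl fun m _ => ?_
  rw [coeff_rescale, coeff_Useries, coeff_Useries]




end PS2

section poch
variable {q a : ℝ}

lemma factor_mem (hq0 : 0 < q) (hq1 : q < 1) (ha0 : 0 ≤ a) (ha1 : a < 1) (k : ℕ) :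
    0 < 1 - q ^ k * a ∧ 1 - q ^ k * a ≤ 1 := by
  have h1 : q ^ k ≤ 1 := pow_le_one₀ hq0.le hq1.le
  have h2 : 0 ≤ q ^ k := pow_nonneg hq0.le k
  have : q ^ k * a ≤ a := by nlinarith
  constructor <;> nlinarith

lemma summable_log_poch (hq0 : 0 < q) (hq1 : q < 1) (ha0 : 0 ≤ a) (ha1 : a < 1) :
    Summable fun k : ℕ => Real.log (1 - q ^ k * a) := by
  apply Summable.of_norm_bounded (g := fun k => (1 - a)⁻¹ * q ^ k)
    (Summable.mul_left _ (summable_geometric_of_lt_one hq0.le hq1))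
  intro k
  have h := factor_mem hq0 hq1 ha0 ha1 k
  have hk1 : q ^ k ≤ 1 := pow_le_one₀ hq0.le hq1.le
  have hk0 : 0 ≤ q ^ k := pow_nonneg hq0.le k
  have hlog : Real.log (1 - q ^ k * a) ≤ 0 := Real.log_nonpos (by linarith [h.1]) h.2
  rw [Real.norm_eq_abs, abs_of_nonpos hlog]
  have hinv : -Real.log (1 - q ^ k * a) = Real.log (1 - q ^ k * a)⁻¹ := by
    rw [Real.log_inv]
  rw [hinv]
  have hpos : (0:ℝ) < 1 - q ^ k * a := h.1
  have hle : Real.log (1 - q ^ k * a)⁻¹ ≤ (1 - q ^ k * a)⁻¹ - 1 :=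
    Real.log_le_sub_one_of_pos (by positivity)
  have e : (1 - q ^ k * a)⁻¹ - 1 = q ^ k * a / (1 - q ^ k * a) := by
    field_simp
    ring
  rw [e] at hle
  refine hle.trans ?_
  have h1a : 1 - a ≤ 1 - q ^ k * a := by nlinarith
  have h1a0 : 0 < 1 - a := by linarith
  rw [div_le_iff₀ hpos, mul_comm (1-a)⁻¹ (q^k)]
  have : q ^ k * a ≤ q ^ k := by nlinarith
  calc q ^ k * a ≤ q ^ k := this
    _ = q ^ k * ((1-a)⁻¹ * (1-a)) := by rw [inv_mul_cancel₀ h1a0.ne']; ring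
    _ ≤ q ^ k * (1-a)⁻¹ * (1 - q ^ k * a) := by
        rw [mul_assoc]
        apply mul_le_mul_of_nonneg_left _ hk0
        apply mul_le_mul_of_nonneg_left h1a (by positivity)

lemma qPochInf_eq_exp (hq0 : 0 < q) (hq1 : q < 1) (ha0 : 0 ≤ a) (ha1 : a < 1) :
    qPochInf q a = Real.exp (∑' k : ℕ, Real.log (1 - q ^ k * a)) := by
  have := Real.rexp_tsum_eq_tprod (f := fun k : ℕ => 1 - q ^ k * a)
    (fun k => (factor_mem hq0 hq1 ha0 ha1 k).1)
    (summable_log_poch hq0 hq1 ha0 ha1)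
  exact this.symm

lemma qPochInf_pos (hq0 : 0 < q) (hq1 : q < 1) (ha0 : 0 ≤ a) (ha1 : a < 1) : 0 < qPochInf q a := by
  rw [qPochInf_eq_exp hq0 hq1 ha0 ha1]; exact Real.exp_pos _

lemma qPochInf_le_one (hq0 : 0 < q) (hq1 : q < 1) (ha0 : 0 ≤ a) (ha1 : a < 1) : qPochInf q a ≤ 1 := by
  rw [qPochInf_eq_exp hq0 hq1 ha0 ha1]
  rw [Real.exp_le_one_iff]
  apply tsum_nonpos
  intro k
  have h := factor_mem hq0 hq1 ha0 ha1 k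
  exact Real.log_nonpos (by linarith [h.1]) h.2

lemma multipliable_poch (hq0 : 0 < q) (hq1 : q < 1) (ha0 : 0 ≤ a) (ha1 : a < 1) :
    Multipliable fun k : ℕ => 1 - q ^ k * a :=
  Real.multipliable_of_summable_log
    (fun k => (factor_mem hq0 hq1 ha0 ha1 k).1)
    (summable_log_poch hq0 hq1 ha0 ha1)

lemma qPochInf_shift (hq0 : 0 < q) (hq1 : q < 1) (ha0 : 0 ≤ a) (ha1 : a < 1) :
    qPochInf q a = (1 - a) * qPochInf q (q * a) := by
  have ha0' : 0 ≤ q * a := by positivity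
  have ha1' : q * a < 1 := by nlinarith
  have hm : Multipliable (fun n : ℕ => 1 - q ^ n * (q * a)) :=
    multipliable_poch hq0 hq1 ha0' ha1'
  have hm' : Multipliable (fun n : ℕ => 1 - q ^ (n + 1) * a) := by
    apply hm.congr
    intro n
    rw [pow_succ]; ring
  have h := tprod_eq_zero_mul' (f := fun k : ℕ => 1 - q ^ k * a) hm'
  rw [qPochInf, h]
  simp only [pow_zero, one_mul]
  congr 1
  apply tprod_congr
  intro k
  rw [pow_succ]
  ring

lemma qPochInf_iterate (hq0 : 0 < q) (hq1 : q < 1) (ha0 : 0 ≤ a) (ha1 : a < 1) (n : ℕ) :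
    qPochInf q a = (∏ i ∈ Finset.range n, (1 - q ^ i * a)) * qPochInf q (q ^ n * a) := by
  induction n with
  | zero => simp
  | succ n ih =>
    have ha0' : 0 ≤ q ^ n * a := by positivity
    have ha1' : q ^ n * a < 1 := by
      have h1 : q ^ n ≤ 1 := pow_le_one₀ hq0.le hq1.le
      nlinarith
    rw [ih, qPochInf_shift hq0 hq1 ha0' ha1', Finset.prod_range_succ]
    rw [mul_assoc]
    congr 2
    rw [pow_succ]
    ring_nf

end poch

section bounds
variable {q : ℝ}

lemma prod_den_pos (hq0 : 0 < q) (hq1 : q < 1) (j : ℕ) :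
    0 < ∏ i ∈ Finset.range j, (1 - q ^ (i + 1)) :=
  Finset.prod_pos fun i _ => one_sub_pow_pos hq0 hq1 i

lemma uCoef_eq_div (q a : ℝ) (j : ℕ) :
    uCoef q a j = (∏ i ∈ Finset.range j, (1 - a * q ^ i))
      / (∏ i ∈ Finset.range j, (1 - q ^ (i + 1))) := by
  rw [uCoef, Finset.prod_div_distrib]

lemma den_ge (hq0 : 0 < q) (hq1 : q < 1) (j : ℕ) :
    qPochInf q q ≤ ∏ i ∈ Finset.range j, (1 - q ^ (i + 1)) := by
  have h := qPochInf_iterate hq0 hq1 hq0.le hq1 j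
  have e : (∏ i ∈ Finset.range j, (1 - q ^ i * q)) = ∏ i ∈ Finset.range j, (1 - q ^ (i + 1)) := by
    apply Finset.prod_congr rfl; intro i _; rw [pow_succ]
  have htail0 : 0 ≤ q ^ j * q := by positivity
  have htail1 : q ^ j * q < 1 := by
    have : q ^ j ≤ 1 := pow_le_one₀ hq0.le hq1.le
    nlinarith
  have h1 := qPochInf_le_one hq0 hq1 htail0 htail1
  have h2 := (qPochInf_pos hq0 hq1 htail0 htail1).le
  rw [h, e]
  have hp := (prod_den_pos hq0 hq1 j).le
  nlinarith

lemma uCoef_nonneg (hq0 : 0 < q) (hq1 : q < 1) {a : ℝ} (ha0 : 0 ≤ a) (ha1 : a < 1) (j : ℕ) :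
    0 ≤ uCoef q a j := by
  rw [uCoef]
  apply Finset.prod_nonneg
  intro i _
  have := (factor_mem hq0 hq1 ha0 ha1 i).1
  have := one_sub_pow_pos hq0 hq1 i
  rw [mul_comm a (q ^ i)] at *
  positivity

lemma uCoef_le (hq0 : 0 < q) (hq1 : q < 1) {a : ℝ} (ha0 : 0 ≤ a) (ha1 : a < 1) (j : ℕ) :
    uCoef q a j ≤ (qPochInf q q)⁻¹ := by
  rw [uCoef_eq_div]
  have hden := prod_den_pos hq0 hq1 j
  have hnum1 : (∏ i ∈ Finset.range j, (1 - a * q ^ i)) ≤ 1 := by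
    apply Finset.prod_le_one
    · intro i _
      have := (factor_mem hq0 hq1 ha0 ha1 i).1
      rw [mul_comm a (q ^ i)]; linarith
    · intro i _
      have := (factor_mem hq0 hq1 ha0 ha1 i).2
      rw [mul_comm a (q ^ i)]; linarith
  have hA := qPochInf_pos hq0 hq1 hq0.le hq1
  have hge := den_ge hq0 hq1 j
  have hnum0 : 0 ≤ ∏ i ∈ Finset.range j, (1 - a * q ^ i) := by
    apply Finset.prod_nonneg
    intro i _
    have := (factor_mem hq0 hq1 ha0 ha1 i).1
    rw [mul_comm a (q ^ i)]; linarith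
  have := div_le_div₀ zero_le_one hnum1 hA hge
  rw [one_div] at this
  exact this

end bounds

section closed
variable {q : ℝ}

lemma rpow_mem (hq0 : 0 < q) (hq1 : q < 1) {γ : ℝ} (hγ : 0 < γ) :
    0 < q ^ γ ∧ q ^ γ < 1 :=
  ⟨Real.rpow_pos_of_pos hq0 γ, Real.rpow_lt_one hq0.le hq1 hγ⟩

/-- closed form for the fractional q-integral -/
lemma Iq_closed (hq0 : 0 < q) (hq1 : q < 1) {γ : ℝ} (hγ : 0 < γ) (f : ℝ → ℝ) {x : ℝ}
    (hx : 0 < x) :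
    Iq q γ f x = x ^ γ * (1 - q) ^ γ
      * ∑' m : ℕ, uCoef q (q ^ γ) m * (q ^ m * f (x * q ^ m)) := by
  have h1q : (0:ℝ) < 1 - q := by linarith
  have hqγ := rpow_mem hq0 hq1 hγ
  set A := qPochInf q q with hA
  set B := qPochInf q (q ^ γ) with hB
  have hApos : 0 < A := qPochInf_pos hq0 hq1 hq0.le hq1
  have hBpos : 0 < B := qPochInf_pos hq0 hq1 hqγ.1.le hqγ.2
  rw [Iq, if_neg hγ.ne', jackson]
  have key : ∀ m : ℕ, q ^ m * (qPoch q (q * (x * q ^ m) / x) (γ - 1) * f (x * q ^ m))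
      = (A / B) * (uCoef q (q ^ γ) m * (q ^ m * f (x * q ^ m))) := by
    intro m
    have e0 : q * (x * q ^ m) / x = q ^ (m + 1) := by
      field_simp
      ring
    rw [e0]
    have e1 : (q:ℝ) ^ (γ - 1) * q ^ (m + 1) = q ^ m * q ^ γ := by
      rw [Real.rpow_sub hq0, Real.rpow_one, pow_succ]
      field_simp
    set Dm := ∏ i ∈ Finset.range m, (1 - q ^ (i+1)) with hDmdef
    set Nm := ∏ i ∈ Finset.range m, (1 - q ^ γ * q ^ i) with hNmdef
    have hDm : 0 < Dm := prod_den_pos hq0 hq1 m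
    have hNm : 0 < Nm := by
      rw [hNmdef]
      apply Finset.prod_pos
      intro i _
      have := (factor_mem hq0 hq1 hqγ.1.le hqγ.2 i).1
      rw [mul_comm (q ^ γ) (q ^ i)]
      exact this
    have eP1 : qPochInf q (q ^ (m + 1)) = A / Dm := by
      have hit1 := qPochInf_iterate hq0 hq1 hq0.le hq1 m
      have eD : (∏ i ∈ Finset.range m, (1 - q ^ i * q)) = Dm := by
        rw [hDmdef]; exact Finset.prod_congr rfl fun i _ => by rw [pow_succ]
      rw [hA, hit1, eD, pow_succ]
      field_simp
    have eP2 : qPochInf q ((q:ℝ) ^ (γ - 1) * q ^ (m + 1)) = B / Nm := by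
      have hit2 := qPochInf_iterate hq0 hq1 hqγ.1.le hqγ.2 m
      have eN : (∏ i ∈ Finset.range m, (1 - q ^ i * q ^ γ)) = Nm := by
        rw [hNmdef]; exact Finset.prod_congr rfl fun i _ => by rw [mul_comm]
      rw [e1, mul_comm ((q:ℝ) ^ m) (q ^ γ)]
      rw [hB, hit2, eN]
      have : qPochInf q (q ^ γ * q ^ m) = qPochInf q (q ^ m * q ^ γ) := by rw [mul_comm]
      rw [this]
      field_simp
    have eu : uCoef q (q ^ γ) m = Nm / Dm := by
      rw [uCoef_eq_div, hNmdef, hDmdef]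
    rw [qPoch, eP1, eP2, eu]
    field_simp
  rw [tsum_congr key, tsum_mul_left]
  have hABne : A / B ≠ 0 := by positivity
  have hpow : (0:ℝ) < (1 - q) ^ (1 - γ) := Real.rpow_pos_of_pos h1q _
  rw [qGamma]
  have e1 : x ^ (γ - 1) * x = x ^ γ := by
    rw [← Real.rpow_add_one hx.ne' (γ - 1)]
    norm_num
  have e2 : (1 - q) ^ (1 - γ) * (1 - q) ^ γ = 1 - q := by
    rw [← Real.rpow_add h1q]
    norm_num
  set S := ∑' m : ℕ, uCoef q (q ^ γ) m * (q ^ m * f (x * q ^ m)) with hS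
  rw [div_mul_eq_mul_div, div_eq_iff (by positivity)]
  linear_combination (A/B*S*(1-q)) * e1 - (A/B*S*x^γ) * e2

end closed

section main

/-- the doubly-indexed summand appearing in the composition of two fractional q-integrals -/
def Tfun (q α β x : ℝ) (f : ℝ → ℝ) (p : ℕ × ℕ) : ℝ :=
  ((q ^ β : ℝ) ^ p.1 * uCoef q (q ^ α) p.1) * uCoef q (q ^ β) p.2
    * (q ^ (p.1 + p.2) * f (x * q ^ (p.1 + p.2)))

/-- the diagonal reindexing of `Tfun` -/
def T2fun (q α β x : ℝ) (f : ℝ → ℝ) (p : ℕ × ℕ) : ℝ :=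
  if p.1 ≤ p.2 then Tfun q α β x f (p.1, p.2 - p.1) else 0

lemma Tfun_apply (q α β x : ℝ) (f : ℝ → ℝ) (m n : ℕ) :
    Tfun q α β x f (m, n) = ((q ^ β : ℝ) ^ m * uCoef q (q ^ α) m) * uCoef q (q ^ β) n
      * (q ^ (m + n) * f (x * q ^ (m + n))) := rfl

lemma T2fun_apply (q α β x : ℝ) (f : ℝ → ℝ) (m k : ℕ) :
    T2fun q α β x f (m, k) = if m ≤ k then Tfun q α β x f (m, k - m) else 0 := rfl

set_option maxHeartbeats 2000000 in
theorem Iq_semigroup_aux (q α β b x : ℝ) (f : ℝ → ℝ) (hq0 : 0 < q) (hq1 : q < 1)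
    (hα : 0 < α) (hβ : 0 < β) (hb : 0 < b) (hf : ContinuousOn f (Set.Icc 0 b))
    (hx : 0 < x) (hxb : x ≤ b) :
    Iq q α (fun y => Iq q β f y) x = Iq q (α + β) f x := by
  have h1q : (0:ℝ) < 1 - q := by linarith
  have hqα := rpow_mem hq0 hq1 hα
  have hqβ := rpow_mem hq0 hq1 hβ
  have hαβ : 0 < α + β := by linarith
  obtain ⟨M, hM⟩ := (isCompact_Icc : IsCompact (Set.Icc (0:ℝ) b)).exists_bound_of_continuousOn hf
  have h0mem : (0:ℝ) ∈ Set.Icc (0:ℝ) b := ⟨le_refl 0, hb.le⟩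
  have hM0 : 0 ≤ M := le_trans (norm_nonneg _) (hM 0 h0mem)
  have hApos : 0 < qPochInf q q := qPochInf_pos hq0 hq1 hq0.le hq1
  have hmem : ∀ k : ℕ, x * q ^ k ∈ Set.Icc (0:ℝ) b := by
    intro k
    have hk1 : q ^ k ≤ 1 := pow_le_one₀ hq0.le hq1.le
    have hk0 : (0:ℝ) ≤ q ^ k := pow_nonneg hq0.le k
    constructor
    · positivity
    · nlinarith
  have hfb : ∀ k : ℕ, |f (x * q ^ k)| ≤ M := by
    intro k
    have := hM _ (hmem k)
    rwa [Real.norm_eq_abs] at this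
  set C : ℝ := (qPochInf q q)⁻¹ * (qPochInf q q)⁻¹ * M with hCdef
  have hC0 : 0 ≤ C := by positivity
  -- bound on |Tfun|
  have hTbound : ∀ p : ℕ × ℕ, |Tfun q α β x f p| ≤ C * (q ^ p.1 * q ^ p.2) := by
    rintro ⟨m, n⟩
    have hu1 := uCoef_nonneg hq0 hq1 hqα.1.le hqα.2 m
    have hu1' := uCoef_le hq0 hq1 hqα.1.le hqα.2 m
    have hu2 := uCoef_nonneg hq0 hq1 hqβ.1.le hqβ.2 n
    have hu2' := uCoef_le hq0 hq1 hqβ.1.le hqβ.2 n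
    have hbm0 : (0:ℝ) ≤ (q ^ β : ℝ) ^ m := pow_nonneg hqβ.1.le m
    have hbm1 : ((q ^ β : ℝ)) ^ m ≤ 1 := pow_le_one₀ hqβ.1.le hqβ.2.le
    have hq0' : (0:ℝ) ≤ q ^ (m + n) := pow_nonneg hq0.le _
    have habs : |Tfun q α β x f (m, n)| = ((q ^ β : ℝ) ^ m * uCoef q (q ^ α) m)
        * uCoef q (q ^ β) n * (q ^ (m + n) * |f (x * q ^ (m + n))|) := by
      rw [Tfun_apply, abs_mul, abs_mul, abs_mul, abs_mul,
        abs_of_nonneg hbm0, abs_of_nonneg hu1, abs_of_nonneg hu2, abs_of_nonneg hq0']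
    rw [habs]
    have e : C * (q ^ m * q ^ n) = (1 * (qPochInf q q)⁻¹) * (qPochInf q q)⁻¹
        * (q ^ (m + n) * M) := by
      rw [hCdef, pow_add]; ring
    rw [e]
    gcongr
    · exact hfb _
  have hgeo : Summable fun k : ℕ => q ^ k := summable_geometric_of_lt_one hq0.le hq1
  have hTsum : Summable (Tfun q α β x f) := by
    apply Summable.of_norm_bounded (g := fun p : ℕ × ℕ => C * (q ^ p.1 * q ^ p.2))
    · exact (hgeo.mul_of_nonneg hgeo (fun k => pow_nonneg hq0.le k)
        (fun k => pow_nonneg hq0.le k)).mul_left C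
    · intro p
      rw [Real.norm_eq_abs]
      exact hTbound p
  have hsq0 : (0:ℝ) ≤ Real.sqrt q := Real.sqrt_nonneg q
  have hsq1 : Real.sqrt q < 1 := by
    have := Real.sqrt_lt_sqrt hq0.le hq1
    rwa [Real.sqrt_one] at this
  have hsqq : Real.sqrt q ^ 2 = q := Real.sq_sqrt hq0.le
  have hT2bound : ∀ p : ℕ × ℕ,
      |T2fun q α β x f p| ≤ C * (Real.sqrt q ^ p.1 * Real.sqrt q ^ p.2) := by
    rintro ⟨m, k⟩
    rw [T2fun_apply]
    split_ifs with hle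
    · have h2 := hTbound (m, k - m)
      have e1 : q ^ m * q ^ (k - m) = q ^ k := by rw [← pow_add, Nat.add_sub_cancel' hle]
      rw [e1] at h2
      refine h2.trans ?_
      have : q ^ k ≤ Real.sqrt q ^ m * Real.sqrt q ^ k := by
        rw [← pow_add]
        have hk : Real.sqrt q ^ (2 * k) = q ^ k := by
          rw [pow_mul, hsqq]
        rw [← hk]
        exact pow_le_pow_of_le_one hsq0 hsq1.le (by omega)
      nlinarith
    · simp only [abs_zero]
      positivity
  have hsqgeo : Summable fun k : ℕ => Real.sqrt q ^ k :=
    summable_geometric_of_lt_one hsq0 hsq1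
  have hT2sum : Summable (T2fun q α β x f) := by
    apply Summable.of_norm_bounded (g := fun p : ℕ × ℕ => C * (Real.sqrt q ^ p.1 * Real.sqrt q ^ p.2))
    · exact (hsqgeo.mul_of_nonneg hsqgeo (fun k => pow_nonneg hsq0 k)
        (fun k => pow_nonneg hsq0 k)).mul_left C
    · intro p
      rw [Real.norm_eq_abs]
      exact hT2bound p
  -- step 1 : reindexing by (m,n) ↦ (m, m+n)
  have step1 : ∑' p : ℕ × ℕ, T2fun q α β x f p = ∑' p : ℕ × ℕ, Tfun q α β x f p := by
    apply tsum_eq_tsum_of_ne_zero_bij (i := fun p => (p.1.1, p.1.1 + p.1.2))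
    · rintro ⟨⟨m, n⟩, hmn⟩ ⟨⟨m', n'⟩, hmn'⟩ h
      simp only [Prod.mk.injEq] at h
      have h1 : m = m' := h.1
      subst h1
      have h2 : n = n' := by omega
      subst h2
      rfl
    · rintro ⟨m, k⟩ hp
      rw [Function.mem_support, T2fun_apply] at hp
      by_cases hle : m ≤ k
      · rw [if_pos hle] at hp
        refine ⟨⟨(m, k - m), hp⟩, ?_⟩
        simp only
        rw [Nat.add_sub_cancel' hle]
      · rw [if_neg hle] at hp
        exact absurd rfl hp
    · rintro ⟨⟨m, n⟩, hmn⟩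
      simp only
      rw [T2fun_apply, if_pos (Nat.le_add_right m n), Nat.add_sub_cancel_left]
  -- step 2 : iterated sum in the (k, m) order
  have hfin : ∀ k : ℕ, Summable fun m : ℕ => T2fun q α β x f (m, k) := by
    intro k
    apply summable_of_ne_finset_zero (s := Finset.range (k + 1))
    intro m hm
    rw [T2fun_apply]
    exact if_neg (fun h => hm (Finset.mem_range.mpr (Nat.lt_succ_of_le h)))
  have step2 : ∑' p : ℕ × ℕ, T2fun q α β x f p
      = ∑' k : ℕ, ∑' m : ℕ, T2fun q α β x f (m, k) := by
    rw [Summable.tsum_prod' hT2sum fun m => hT2sum.prod_factor m]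
    exact (Summable.tsum_comm' (f := fun m k => T2fun q α β x f (m, k)) hT2sum (fun m => hT2sum.prod_factor m) hfin).symm
  -- step 3 : the inner sums via the q-Vandermonde identity
  have step3 : ∀ k : ℕ, ∑' m : ℕ, T2fun q α β x f (m, k)
      = uCoef q (q ^ (α + β)) k * (q ^ k * f (x * q ^ k)) := by
    intro k
    rw [tsum_eq_sum (s := Finset.range (k + 1))
      (fun m hm => by
        rw [T2fun_apply]
        exact if_neg (fun h => hm (Finset.mem_range.mpr (Nat.lt_succ_of_le h))))]
    have hterm : ∀ m ∈ Finset.range (k + 1), T2fun q α β x f (m, k)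
        = ((q ^ β : ℝ) ^ m * uCoef q (q ^ α) m * uCoef q (q ^ β) (k - m))
          * (q ^ k * f (x * q ^ k)) := by
      intro m hm
      have hle : m ≤ k := Nat.lt_succ_iff.mp (Finset.mem_range.mp hm)
      rw [T2fun_apply, if_pos hle, Tfun_apply, Nat.add_sub_cancel' hle]
    rw [Finset.sum_congr rfl hterm, ← Finset.sum_mul, qVandermonde hq0 hq1, ← Real.rpow_add hq0]
  -- expand both sides via the closed form
  rw [Iq_closed hq0 hq1 hα _ hx, Iq_closed hq0 hq1 hαβ f hx]
  have hinner : ∀ m : ℕ, uCoef q (q ^ α) m * (q ^ m * (fun y => Iq q β f y) (x * q ^ m))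
      = (x ^ β * (1 - q) ^ β) * ∑' n : ℕ, Tfun q α β x f (m, n) := by
    intro m
    have hxm : 0 < x * q ^ m := by positivity
    simp only
    rw [Iq_closed hq0 hq1 hβ f hxm]
    have ex : (x * q ^ m) ^ β = x ^ β * ((q:ℝ) ^ β) ^ m := by
      rw [Real.mul_rpow hx.le (pow_nonneg hq0.le m)]
      congr 1
      rw [← Real.rpow_natCast q m, ← Real.rpow_mul hq0.le, mul_comm, Real.rpow_mul hq0.le,
        Real.rpow_natCast]
    rw [ex]
    have hterm : ∀ n : ℕ, Tfun q α β x f (m, n)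
        = (((q:ℝ) ^ β) ^ m * uCoef q (q ^ α) m * q ^ m)
          * (uCoef q (q ^ β) n * (q ^ n * f (x * q ^ m * q ^ n))) := by
      intro n
      rw [Tfun_apply]
      have harg : x * q ^ (m + n) = x * q ^ m * q ^ n := by rw [pow_add]; ring
      rw [harg, pow_add]
      ring
    rw [tsum_congr hterm, tsum_mul_left]
    ring
  rw [tsum_congr hinner, tsum_mul_left]
  have hdouble : ∑' m : ℕ, ∑' n : ℕ, Tfun q α β x f (m, n)
      = ∑' k : ℕ, uCoef q (q ^ (α + β)) k * (q ^ k * f (x * q ^ k)) := by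
    rw [← Summable.tsum_prod' hTsum fun m => hTsum.prod_factor m, ← step1, step2]
    exact tsum_congr step3
  rw [hdouble, Real.rpow_add hx, Real.rpow_add h1q]
  ring

end main

theorem Iq_semigroup (q α β b x : ℝ) (f : ℝ → ℝ) (hq0 : 0 < q) (hq1 : q < 1)
    (hα : 0 < α) (hβ : 0 < β) (hb : 0 < b) (hf : ContinuousOn f (Set.Icc 0 b))
    (hx : 0 < x) (hxb : x ≤ b) :
    Iq q α (fun y => Iq q β f y) x = Iq q (α + β) f x :=
  Iq_semigroup_aux q α β b x f hq0 hq1 hα hβ hb hf hx hxb
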